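/- Let G be a d-regular graph on n vertices with λ = max(|λ_2|, |λ_n|). Then the maximum modularity satisfies q*(G) ≤ λ/d. -/

import Mathlib

open Finset

/-- Volume of a vertex set: sum of degrees. -/
def graphVol {V : Type*} [Fintype V] (G : SimpleGraph V) [DecidableRel G.Adj]
    (A : Finset V) : ℕ := ∑ v ∈ A, G.degree v

/-- Number of ordered pairs of adjacent vertices both in `A` (equals `2·e(A)`). -/
def interiorPairs {V : Type*} [Fintype V] (G : SimpleGraph V) [DecidableRel G.Adj]
    (A : Finset V) : ℕ := ((A ×ˢ A).filter fun p => G.Adj p.1 p.2).card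

/-- Modularity of the partition of `V` given by the fibers of `c`.
Since `interiorPairs G A = 2 e(A)` and `graphVol G univ = 2|E|`, the first term is
`e(A_i)/|E|` and the second is `(vol(A_i)/vol(V))^2`. -/
def modularity {V : Type*} [Fintype V] [DecidableEq V] (G : SimpleGraph V) [DecidableRel G.Adj]
    {ι : Type*} [Fintype ι] [DecidableEq ι] (c : V → ι) : ℚ :=
  ∑ i : ι, ((interiorPairs G (univ.filter fun v => c v = i) : ℚ) / (graphVol G univ)
    - ((graphVol G (univ.filter fun v => c v = i) : ℚ) / (graphVol G univ)) ^ 2)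


/-- for a `d`-regular graph `G` on `n` vertices with `lam = max(|λ₂|,|λ_n|)`
(expressed via the Rayleigh quotient on the space orthogonal to the all-ones vector),
the maximum modularity satisfies `q*(G) ≤ lam/d`, i.e. every partition (given by the
fibers of a coloring `c`) has modularity at most `lam/d`. -/
theorem max_modularity_le {V : Type*} [Fintype V] [DecidableEq V] [Nonempty V]
    (G : SimpleGraph V) [DecidableRel G.Adj]
    (d : ℕ) (hd : 0 < d) (hreg : ∀ v, G.degree v = d)
    (lam : ℝ)
    (hlam : ∀ x : V → ℝ, (∑ v, x v) = 0 →
      |dotProduct x ((G.adjMatrix ℝ).mulVec x)| ≤ lam * ∑ v, x v ^ 2)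
    {ι : Type*} [Fintype ι] [DecidableEq ι] (c : V → ι) :
    ((modularity G c : ℚ) : ℝ) ≤ lam / d := by
  classical
  set N := Fintype.card V with hNdef
  have hN1 : 0 < N := Fintype.card_pos
  set n : ℝ := (N : ℝ) with hndef
  have hn : (0:ℝ) < n := by rw [hndef]; exact_mod_cast hN1
  have hdR : (0:ℝ) < (d:ℝ) := by exact_mod_cast hd
  set A : ι → Finset V := fun i => univ.filter fun v => c v = i with hA
  set a : ι → ℝ := fun i => ((A i).card : ℝ) with ha
  have ha0 : ∀ i, 0 ≤ a i := fun i => Nat.cast_nonneg _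
  set f : ι → V → ℝ := fun i v => if c v = i then 1 else 0 with hf
  set x : ι → V → ℝ := fun i v => f i v - a i / n with hx
  set g : V → V → ℝ := fun v u => if G.Adj v u then 1 else 0 with hg
  -- basic sums
  have hfa : ∀ i, (∑ v, f i v) = a i := by
    intro i; simp [hf, ha, hA, Finset.sum_boole]
  have hsum0 : ∀ i, (∑ v, x i v) = 0 := by
    intro i
    simp only [hx, Finset.sum_sub_distrib, hfa, Finset.sum_const, Finset.card_univ,
      nsmul_eq_mul]
    rw [← hNdef, ← hndef]
    field_simp
    ring
  have hrow : ∀ v, (∑ u, g v u) = (d:ℝ) := by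
    intro v
    simp only [hg, Finset.sum_boole]
    rw [← SimpleGraph.neighborFinset_eq_filter,
      SimpleGraph.card_neighborFinset_eq_degree, hreg]
  have hgsymm : ∀ v u, g v u = g u v := by
    intro v u; simp only [hg, G.adj_comm]
  have hcol : ∀ u, (∑ v, g v u) = (d:ℝ) := by
    intro u; rw [Finset.sum_congr rfl fun v _ => hgsymm v u]; exact hrow u
  -- sum of squares
  have hsq : ∀ i, (∑ v, x i v ^ 2) = a i - a i ^ 2 / n := by
    intro i
    have h1 : ∀ v, x i v ^ 2 = f i v - 2 * (a i / n) * f i v + (a i / n)^2 := by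
      intro v
      have hff : f i v ^ 2 = f i v := by by_cases h : c v = i <;> simp [hf, h]
      have : x i v ^ 2 = f i v ^ 2 - 2 * (a i / n) * f i v + (a i / n)^2 := by
        simp only [hx]; ring
      rw [this, hff]
    rw [Finset.sum_congr rfl fun v _ => h1 v]
    simp only [Finset.sum_add_distrib, Finset.sum_sub_distrib, hfa, ← Finset.mul_sum,
      Finset.sum_const, Finset.card_univ, nsmul_eq_mul, ← hNdef, ← hndef]
    field_simp
    ring
  -- interiorPairs as double sum
  have hP : ∀ i, ((interiorPairs G (A i) : ℝ)) = ∑ v, ∑ u, g v u * (f i v * f i u) := by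
    intro i
    have h1 : interiorPairs G (A i)
        = ∑ v ∈ A i, ∑ u ∈ A i, (if G.Adj v u then 1 else 0 : ℕ) := by
      rw [interiorPairs, Finset.card_filter, Finset.sum_product]
    rw [h1]
    push_cast
    rw [Finset.sum_filter]
    refine Finset.sum_congr rfl fun v _ => ?_
    rw [Finset.sum_filter]
    by_cases hv : c v = i
    · simp only [hv, if_true]
      refine Finset.sum_congr rfl fun u _ => ?_
      by_cases hu : c u = i <;> simp [hf, hg, hv, hu]
    · simp only [hv, if_false]
      refine (Finset.sum_eq_zero fun u _ => ?_).symm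
      simp [hf, hv]
  -- the key dot product identity
  have hdot : ∀ i, dotProduct (x i) ((G.adjMatrix ℝ).mulVec (x i))
      = (interiorPairs G (A i) : ℝ) - (d:ℝ) * a i ^ 2 / n := by
    intro i
    have h0 : dotProduct (x i) ((G.adjMatrix ℝ).mulVec (x i))
        = ∑ v, ∑ u, g v u * (x i v * x i u) := by
      rw [dotProduct]
      refine Finset.sum_congr rfl fun v _ => ?_
      rw [Matrix.mulVec, dotProduct, Finset.mul_sum]
      refine Finset.sum_congr rfl fun u _ => ?_
      simp only [SimpleGraph.adjMatrix_apply, hg]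
      ring
    have hexp : ∀ v u, g v u * (x i v * x i u)
        = g v u * (f i v * f i u) - (a i / n) * (g v u * f i v)
          - (a i / n) * (g v u * f i u) + (a i / n)^2 * g v u := by
      intro v u; simp only [hx]; ring
    have hS2 : (∑ v, ∑ u, g v u * f i v) = (d:ℝ) * a i := by
      have : ∀ v, (∑ u, g v u * f i v) = (d:ℝ) * f i v := by
        intro v; rw [← Finset.sum_mul, hrow, mul_comm]
      rw [Finset.sum_congr rfl fun v _ => this v, ← Finset.mul_sum, hfa]
    have hS3 : (∑ v, ∑ u, g v u * f i u) = (d:ℝ) * a i := by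
      rw [Finset.sum_comm]
      have : ∀ u, (∑ v, g v u * f i u) = (d:ℝ) * f i u := by
        intro u; rw [← Finset.sum_mul, hcol, mul_comm]
      rw [Finset.sum_congr rfl fun u _ => this u, ← Finset.mul_sum, hfa]
    have hS4 : (∑ v, ∑ u, g v u) = (d:ℝ) * n := by
      rw [Finset.sum_congr rfl fun v _ => hrow v, Finset.sum_const, Finset.card_univ,
        nsmul_eq_mul, ← hNdef, ← hndef, mul_comm]
    rw [h0, Finset.sum_congr rfl fun v (_ : v ∈ univ) =>
      Finset.sum_congr rfl fun u (_ : u ∈ univ) => hexp v u]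
    simp only [Finset.sum_add_distrib, Finset.sum_sub_distrib, ← Finset.mul_sum]
    rw [hS2, hS3, hS4, hP i]
    field_simp
    ring
  -- lam is nonnegative
  have hlam0 : 0 ≤ lam := by
    obtain ⟨v0⟩ := ‹Nonempty V›
    have hdeg : 0 < G.degree v0 := by rw [hreg]; exact hd
    have hcpos : 0 < (G.neighborFinset v0).card := by
      rw [SimpleGraph.card_neighborFinset_eq_degree]; exact hdeg
    obtain ⟨u0, hu0⟩ := Finset.card_pos.mp hcpos
    have hadj : G.Adj v0 u0 := (SimpleGraph.mem_neighborFinset _ _ _).mp hu0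
    have hne : u0 ≠ v0 := (G.ne_of_adj hadj).symm
    set y : V → ℝ := fun w => (if w = v0 then 1 else 0) - (if w = u0 then 1 else 0) with hy
    have hy0 : (∑ w, y w) = 0 := by
      simp [hy, Finset.sum_sub_distrib]
    have hysq : (∑ w, y w ^ 2) = 2 := by
      have : ∀ w, y w ^ 2 = (if w = v0 then 1 else 0) + (if w = u0 then 1 else 0) := by
        intro w
        rcases eq_or_ne w v0 with h1 | h1
        · subst h1
          have h2 : w ≠ u0 := hne.symm
          simp [hy, h2]
        · rcases eq_or_ne w u0 with h2 | h2 <;> simp [hy, h1, h2, hne]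
      rw [Finset.sum_congr rfl fun w _ => this w]
      simp [Finset.sum_add_distrib]
      norm_num
    have := hlam y hy0
    rw [hysq] at this
    nlinarith [abs_nonneg (dotProduct y ((G.adjMatrix ℝ).mulVec y))]
  -- volumes
  have hvolU : (graphVol G univ : ℝ) = (d:ℝ) * n := by
    simp [graphVol, hreg, Finset.sum_const, Finset.card_univ, ← hNdef, ← hndef, mul_comm]
  have hvolA : ∀ i, (graphVol G (A i) : ℝ) = (d:ℝ) * a i := by
    intro i; simp [graphVol, hreg, Finset.sum_const, ha, mul_comm]
  -- rewrite modularity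
  have hmod : ((modularity G c : ℚ) : ℝ)
      = ∑ i, dotProduct (x i) ((G.adjMatrix ℝ).mulVec (x i)) / ((d:ℝ) * n) := by
    rw [modularity]
    push_cast
    refine Finset.sum_congr rfl fun i _ => ?_
    have hAi : (univ.filter fun v => c v = i) = A i := rfl
    rw [hAi, hvolU, hvolA i, hdot i]
    field_simp
  rw [hmod]
  have hbound : ∀ i, dotProduct (x i) ((G.adjMatrix ℝ).mulVec (x i))
      ≤ lam * (a i - a i ^ 2 / n) := by
    intro i
    have := hlam (x i) (hsum0 i)
    rw [hsq i] at this
    exact le_trans (le_abs_self _) this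
  have hsuma : (∑ i, a i) = n := by
    have : (N : ℝ) = ((∑ i, (A i).card : ℕ) : ℝ) := by
      exact_mod_cast congrArg (Nat.cast : ℕ → ℝ)
        (Finset.card_eq_sum_card_fiberwise (fun v _ => Finset.mem_univ (c v)))
    rw [hndef, this]
    push_cast
    rfl
  calc (∑ i, dotProduct (x i) ((G.adjMatrix ℝ).mulVec (x i)) / ((d:ℝ) * n))
      ≤ ∑ i, lam * (a i - a i ^ 2 / n) / ((d:ℝ) * n) := by
        refine Finset.sum_le_sum fun i _ => ?_
        exact div_le_div_of_nonneg_right (hbound i) (by positivity)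
    _ = lam * (∑ i, (a i - a i ^ 2 / n)) / ((d:ℝ) * n) := by
        rw [Finset.mul_sum, Finset.sum_div]
    _ ≤ lam * n / ((d:ℝ) * n) := by
        apply div_le_div_of_nonneg_right _ (by positivity)
        apply mul_le_mul_of_nonneg_left _ hlam0
        rw [Finset.sum_sub_distrib, hsuma]
        have : 0 ≤ ∑ i, a i ^ 2 / n := Finset.sum_nonneg fun i _ => by positivity
        linarith
    _ = lam / d := by field_simp
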